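/- Let φ, ψ: ℝ^d → ℂ be characteristic functions of probability measures such that ∏_{i=1}^k φ(t_i) = ∏_{i=1}^k ψ(t_i) for all k ≥ 2 and all t_1,…,t_k ∈ ℝ^d with ∑_i t_i = 0. Then there exists a ∈ ℝ^d such that φ(t) = ψ(t) e^{i⟨a,t⟩} for all t ∈ ℝ^d. -/

import Mathlib

open MeasureTheory Filter Topology Metric

/-- A function additive and continuous on a ball around `0` in Euclidean space is
given there by an inner ℝ product with some fixed vector. -/
lemma locally_additive_inner (d : ℕ) (θ : EuclideanSpace ℝ (Fin d) → ℝ) (r : ℝ) (hr : 0 < r)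
    (h0 : θ 0 = 0)
    (hadd : ∀ t s, ‖t‖ < r → ‖s‖ < r → ‖t + s‖ < r → θ (t + s) = θ t + θ s)
    (hcont : ∀ t, ‖t‖ < r → ContinuousAt θ t) :
    ∃ a : EuclideanSpace ℝ (Fin d), ∀ t, ‖t‖ < r → θ t = (inner ℝ a t : ℝ) := by
  -- Step 1: θ ((k:ℝ) • x) = k * θ x whenever k * ‖x‖ < r
  have hθnat : ∀ (k : ℕ) (x : EuclideanSpace ℝ (Fin d)), (k : ℝ) * ‖x‖ < r →
      θ ((k : ℝ) • x) = (k : ℝ) * θ x := by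
    intro k
    induction k with
    | zero => intro x _; simp [h0]
    | succ k ih =>
      intro x hx
      have hk1 : (1 : ℝ) ≤ (k + 1 : ℕ) := by exact_mod_cast Nat.one_le_iff_ne_zero.mpr (by simp)
      have hxr : ‖x‖ < r := by
        nlinarith [norm_nonneg x]
      have hkx : (k : ℝ) * ‖x‖ < r := by
        have : (k : ℝ) * ‖x‖ ≤ ((k + 1 : ℕ) : ℝ) * ‖x‖ := by
          push_cast
          nlinarith [norm_nonneg x]
        linarith
      have hnormk : ‖(k : ℝ) • x‖ = (k : ℝ) * ‖x‖ := by
        rw [norm_smul, Real.norm_eq_abs, abs_of_nonneg (by positivity)]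
      have hsplit : ((k + 1 : ℕ) : ℝ) • x = (k : ℝ) • x + x := by
        push_cast
        rw [add_smul, one_smul]
      rw [hsplit, hadd _ _ (by rw [hnormk]; exact hkx) hxr (by
        rw [← hsplit]
        rw [norm_smul, Real.norm_eq_abs, abs_of_nonneg (by positivity)]
        exact hx), ih x hkx]
      push_cast
      ring
  -- Step 2: a globally defined extension Θ
  set N : EuclideanSpace ℝ (Fin d) → ℕ := fun t => ⌊‖t‖ / r⌋₊ + 1 with hN
  have hNt : ∀ t, ‖t‖ < (N t : ℝ) * r := by
    intro t
    have := Nat.lt_floor_add_one (‖t‖ / r)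
    have h2 : ‖t‖ / r < ((N t : ℕ) : ℝ) := by show ‖t‖ / r < ((⌊‖t‖ / r⌋₊ + 1 : ℕ) : ℝ); push_cast; exact this
    calc ‖t‖ = (‖t‖ / r) * r := by field_simp
    _ < (N t : ℝ) * r := by exact mul_lt_mul_of_pos_right h2 hr
  set Θ : EuclideanSpace ℝ (Fin d) → ℝ := fun t => (N t : ℝ) * θ ((N t : ℝ)⁻¹ • t) with hΘdef
  -- well-definedness
  have hwd : ∀ t (n m : ℕ), ‖t‖ < (n : ℝ) * r → ‖t‖ < (m : ℝ) * r →
      (n : ℝ) * θ ((n : ℝ)⁻¹ • t) = (m : ℝ) * θ ((m : ℝ)⁻¹ • t) := by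
    have key : ∀ t (n m : ℕ), ‖t‖ < (n : ℝ) * r → 0 < m →
        (n : ℝ) * θ ((n : ℝ)⁻¹ • t) = ((n * m : ℕ) : ℝ) * θ (((n * m : ℕ) : ℝ)⁻¹ • t) := by
      intro t n m hn hm
      have hn0 : 0 < n := by
        by_contra hc
        push_neg at hc
        interval_cases n
        simp at hn
        nlinarith [norm_nonneg t]
      have hnR : (0 : ℝ) < n := by exact_mod_cast hn0
      have hmR : (0 : ℝ) < m := by exact_mod_cast hm
      have hsm : (m : ℝ) • (((n * m : ℕ) : ℝ)⁻¹ • t) = (n : ℝ)⁻¹ • t := by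
        rw [smul_smul]
        congr 1
        push_cast
        field_simp
      have hcond : (m : ℝ) * ‖((n * m : ℕ) : ℝ)⁻¹ • t‖ < r := by
        rw [norm_smul, Real.norm_eq_abs, abs_of_nonneg (by positivity)]
        push_cast
        rw [show (m : ℝ) * (((n : ℝ) * m)⁻¹ * ‖t‖) = ‖t‖ / n by field_simp]
        rw [div_lt_iff₀ hnR]
        linarith [hn]
      have := hθnat m (((n * m : ℕ) : ℝ)⁻¹ • t) hcond
      rw [hsm] at this
      rw [this]
      push_cast
      ring
    intro t n m hn hm
    have h1 := key t n m hn (by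
      by_contra hc
      push_neg at hc
      interval_cases m
      simp at hm
      nlinarith [norm_nonneg t])
    have h2 := key t m n hm (by
      by_contra hc
      push_neg at hc
      interval_cases n
      simp at hn
      nlinarith [norm_nonneg t])
    rw [h1, h2, Nat.mul_comm]
  have hΘeq : ∀ t (n : ℕ), ‖t‖ < (n : ℝ) * r → Θ t = (n : ℝ) * θ ((n : ℝ)⁻¹ • t) := by
    intro t n hn
    exact hwd t (N t) n (hNt t) hn
  have hΘθ : ∀ t, ‖t‖ < r → Θ t = θ t := by
    intro t ht
    have := hΘeq t 1 (by simpa using ht)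
    simpa using this
  -- additivity of Θ
  have hΘadd : ∀ t s, Θ (t + s) = Θ t + Θ s := by
    intro t s
    set n : ℕ := N t + N s with hn
    have hnR : (0 : ℝ) < n := by positivity
    have hcast : ((N t : ℕ) : ℝ) + ((N s : ℕ) : ℝ) = (n : ℝ) := by
      rw [hn]; push_cast; ring
    have hNt' := hNt t
    have hNs' := hNt s
    have hNtnn : (0:ℝ) ≤ (N t : ℝ) := Nat.cast_nonneg _
    have hNsnn : (0:ℝ) ≤ (N s : ℝ) := Nat.cast_nonneg _
    have h1 : ‖t‖ < (n : ℝ) * r := by nlinarith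
    have h2 : ‖s‖ < (n : ℝ) * r := by nlinarith
    have h3 : ‖t + s‖ < (n : ℝ) * r := by
      have := norm_add_le t s
      nlinarith
    have e1 := hΘeq t n h1
    have e2 := hΘeq s n h2
    have e3 := hΘeq (t + s) n h3
    have hb : ∀ u : EuclideanSpace ℝ (Fin d), ‖u‖ < (n : ℝ) * r → ‖(n : ℝ)⁻¹ • u‖ < r := by
      intro u hu
      rw [norm_smul, Real.norm_eq_abs, abs_of_nonneg (by positivity)]
      rw [inv_mul_lt_iff₀ hnR] -- maybe name differs
      linarith
    have hsmul : (n : ℝ)⁻¹ • (t + s) = (n : ℝ)⁻¹ • t + (n : ℝ)⁻¹ • s := smul_add _ _ _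
    rw [e1, e2, e3, hsmul, hadd _ _ (hb t h1) (hb s h2) (by rw [← hsmul]; exact hb _ h3)]
    ring
  -- continuity of Θ
  have hΘcont : Continuous Θ := by
    rw [continuous_iff_continuousAt]
    intro t
    set n : ℕ := N t + 1 with hn
    have hnR : (0 : ℝ) < n := by positivity
    have hball : ∀ s, dist s t < r → ‖s‖ < (n : ℝ) * r := by
      intro s hs
      have : ‖s‖ ≤ ‖t‖ + dist s t := by
        rw [dist_eq_norm]
        calc ‖s‖ = ‖t + (s - t)‖ := by rw [show t + (s - t) = s by abel]
        _ ≤ ‖t‖ + ‖s - t‖ := norm_add_le _ _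
      have := hNt t
      rw [hn]
      push_cast
      push_cast at this ⊢
      nlinarith [hNt t]
    have heq : (fun s => (n : ℝ) * θ ((n : ℝ)⁻¹ • s)) =ᶠ[nhds t] Θ := by
      apply Metric.eventually_nhds_iff.mpr
      exact ⟨r, hr, fun {s} hs => (hΘeq s n (hball s hs)).symm⟩
    apply ContinuousAt.congr _ heq
    have hxt : ‖(n : ℝ)⁻¹ • t‖ < r := by
      rw [norm_smul, Real.norm_eq_abs, abs_of_nonneg (by positivity)]
      rw [inv_mul_lt_iff₀ hnR]
      have := hball t (by simpa using hr)
      linarith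
    exact continuousAt_const.mul ((hcont _ hxt).comp ((continuous_const_smul ((n:ℝ)⁻¹)).continuousAt))
  -- ℝ-homogeneity of Θ
  let Θ' : EuclideanSpace ℝ (Fin d) →+ ℝ := AddMonoidHom.mk' Θ hΘadd
  have hΘsmul : ∀ (c : ℝ) t, Θ (c • t) = c * Θ t := by
    intro c t
    have hfun : (fun c : ℝ => Θ (c • t)) = fun c : ℝ => c * Θ t := by
      apply Continuous.ext_on Rat.denseRange_cast
      · exact hΘcont.comp (continuous_id.smul continuous_const)
      · exact continuous_id.mul continuous_const
      · rintro _ ⟨q, rfl⟩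
        have := map_ratCast_smul Θ' ℝ ℝ q t
        simpa [Θ', smul_eq_mul] using this
    exact congrFun hfun c
  -- define a
  set a : EuclideanSpace ℝ (Fin d) :=
    (WithLp.equiv 2 (Fin d → ℝ)).symm (fun i => Θ (EuclideanSpace.single i 1)) with ha
  refine ⟨a, fun t ht => ?_⟩
  have hts : t = ∑ i, t i • EuclideanSpace.single i (1 : ℝ) := by
    have := (EuclideanSpace.basisFun (Fin d) ℝ).sum_repr t
    simp only [EuclideanSpace.basisFun_repr, EuclideanSpace.basisFun_apply] at this
    exact this.symm
  have hΘt : Θ t = ∑ i, t i * Θ (EuclideanSpace.single i 1) := by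
    conv_lhs => rw [hts]
    rw [show Θ (∑ i, t i • EuclideanSpace.single i (1:ℝ)) =
        Θ' (∑ i, t i • EuclideanSpace.single i (1:ℝ)) from rfl, map_sum]
    congr 1
    funext i
    exact hΘsmul (t i) _
  rw [← hΘθ t ht]
  rw [hΘt]
  rw [PiLp.inner_apply]
  congr 1

/-- If the characteristic functions φ, ψ of two probability measures on ℝ^d
satisfy ∏ φ(t_i) = ∏ ψ(t_i) whenever ∑ t_i = 0, then φ(t) = ψ(t) e^{i⟨a,t⟩} for
some a ∈ ℝ^d, i.e. the measures agree up to a translation. -/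
theorem stmt13 (d : ℕ) (μ ν : Measure (EuclideanSpace ℝ (Fin d)))
    [IsProbabilityMeasure μ] [IsProbabilityMeasure ν]
    (φ ψ : EuclideanSpace ℝ (Fin d) → ℂ)
    (hφ : ∀ t, φ t = ∫ x, Complex.exp (Complex.I * ((inner ℝ t x : ℝ) : ℂ)) ∂μ)
    (hψ : ∀ t, ψ t = ∫ x, Complex.exp (Complex.I * ((inner ℝ t x : ℝ) : ℂ)) ∂ν)
    (h : ∀ k : ℕ, 2 ≤ k → ∀ t : Fin k → EuclideanSpace ℝ (Fin d),
      (∑ i, t i) = 0 → (∏ i, φ (t i)) = ∏ i, ψ (t i)) :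
    ∃ a : EuclideanSpace ℝ (Fin d), ∀ t,
      φ t = ψ t * Complex.exp (Complex.I * ((inner ℝ a t : ℝ) : ℂ)) := by
  -- Continuity of characteristic functions.
  have charCont : ∀ (m : Measure (EuclideanSpace ℝ (Fin d))), IsProbabilityMeasure m →
      Continuous fun t : EuclideanSpace ℝ (Fin d) =>
        ∫ x, Complex.exp (Complex.I * ((inner ℝ t x : ℝ) : ℂ)) ∂m := by
    intro m _
    apply continuous_of_dominated (bound := fun _ => 1)
    · intro t
      apply Continuous.aestronglyMeasurable
      exact Complex.continuous_exp.comp (continuous_const.mul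
        (Complex.continuous_ofReal.comp (continuous_const.inner continuous_id)))
    · intro t
      filter_upwards with x
      simp [Complex.norm_exp, Complex.mul_re, Complex.I_re, Complex.I_im]
    · exact integrable_const 1
    · filter_upwards with x
      exact Complex.continuous_exp.comp (continuous_const.mul
        (Complex.continuous_ofReal.comp (continuous_id.inner continuous_const)))
  have hφc : Continuous φ := by
    have hfe : φ = fun t => ∫ x, Complex.exp (Complex.I * ((inner ℝ t x : ℝ) : ℂ)) ∂μ := funext hφ
    rw [hfe]; exact charCont μ inferInstance
  have hψc : Continuous ψ := by
    have hfe : ψ = fun t => ∫ x, Complex.exp (Complex.I * ((inner ℝ t x : ℝ) : ℂ)) ∂ν := funext hψ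
    rw [hfe]; exact charCont ν inferInstance
  have hφ0 : φ 0 = 1 := by
    rw [hφ]
    simp
  have hψ0 : ψ 0 = 1 := by
    rw [hψ]
    simp
  -- conjugation symmetry
  have hconj : ∀ (m : Measure (EuclideanSpace ℝ (Fin d))) (t : EuclideanSpace ℝ (Fin d)),
      (∫ x, Complex.exp (Complex.I * ((inner ℝ (-t) x : ℝ) : ℂ)) ∂m)
        = (starRingEnd ℂ) (∫ x, Complex.exp (Complex.I * ((inner ℝ t x : ℝ) : ℂ)) ∂m) := by
    intro m t
    rw [← integral_conj]
    congr 1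
    funext x
    rw [← Complex.exp_conj]
    congr 1
    simp only [map_mul, Complex.conj_I, Complex.conj_ofReal, inner_neg_left]
    push_cast
    ring
  have hφneg : ∀ t, φ (-t) = (starRingEnd ℂ) (φ t) := by
    intro t; rw [hφ, hφ]; exact hconj μ t
  have hψneg : ∀ t, ψ (-t) = (starRingEnd ℂ) (ψ t) := by
    intro t; rw [hψ, hψ]; exact hconj ν t
  -- equal moduli
  have habs : ∀ t, ‖φ t‖ = ‖ψ t‖ := by
    intro t
    have h2 := h 2 le_rfl ![t, -t] (by simp [Fin.sum_univ_two])
    rw [Fin.prod_univ_two, Fin.prod_univ_two] at h2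
    simp only [Matrix.cons_val_zero, Matrix.cons_val_one, Matrix.head_cons] at h2
    rw [hφneg, hψneg, Complex.mul_conj, Complex.mul_conj] at h2
    have hsq : Complex.normSq (φ t) = Complex.normSq (ψ t) := by exact_mod_cast h2
    rw [Complex.normSq_eq_norm_sq, Complex.normSq_eq_norm_sq] at hsq
    exact (pow_left_inj₀ (norm_nonneg _) (norm_nonneg _) two_ne_zero).mp hsq
  -- pick a ball where φ, ψ are close to 1
  obtain ⟨r, hr, hball⟩ : ∃ r > 0, ∀ t : EuclideanSpace ℝ (Fin d), ‖t‖ < r →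
      ‖φ t - 1‖ < 1/4 ∧ ‖ψ t - 1‖ < 1/4 := by
    obtain ⟨δ1, hδ1, H1⟩ := Metric.continuousAt_iff.mp (hφc.continuousAt (x := 0))
      (1/4) (by norm_num)
    obtain ⟨δ2, hδ2, H2⟩ := Metric.continuousAt_iff.mp (hψc.continuousAt (x := 0))
      (1/4) (by norm_num)
    refine ⟨min δ1 δ2, lt_min hδ1 hδ2, fun t ht => ⟨?_, ?_⟩⟩
    · have := H1 (x := t) (by rw [dist_zero_right]; exact ht.trans_le (min_le_left _ _))
      rwa [dist_eq_norm, hφ0] at this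
    · have := H2 (x := t) (by rw [dist_zero_right]; exact ht.trans_le (min_le_right _ _))
      rwa [dist_eq_norm, hψ0] at this
  have hψne : ∀ t, ‖t‖ < r → ψ t ≠ 0 := by
    intro t ht h0
    have := (hball t ht).2
    rw [h0] at this
    norm_num at this
  have hφne : ∀ t, ‖t‖ < r → φ t ≠ 0 := by
    intro t ht h0
    have := (hball t ht).1
    rw [h0] at this
    norm_num at this
  -- χ := φ/ψ has modulus 1 and positive real part on the ball
  have hχabs : ∀ t, ‖t‖ < r → ‖φ t / ψ t‖ = 1 := by
    intro t ht
    rw [norm_div, habs t, div_self]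
    exact norm_ne_zero_iff.mpr (hψne t ht)
  have hχre : ∀ t, ‖t‖ < r → 0 < (φ t / ψ t).re := by
    intro t ht
    have hψb : (3:ℝ)/4 < ‖ψ t‖ := by
      have h1 : ‖(1:ℂ)‖ - ‖ψ t‖ ≤ ‖1 - ψ t‖ := norm_sub_norm_le _ _
      rw [norm_sub_rev] at h1
      have := (hball t ht).2
      simp only [norm_one] at h1
      linarith
    have hnum : ‖φ t - ψ t‖ ≤ 1/2 := by
      have h1 := (hball t ht).1
      have h2 := (hball t ht).2
      calc ‖φ t - ψ t‖ = ‖(φ t - 1) + (1 - ψ t)‖ := by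
            rw [show φ t - ψ t = (φ t - 1) + (1 - ψ t) by ring]
      _ ≤ ‖φ t - 1‖ + ‖1 - ψ t‖ := norm_add_le _ _
      _ ≤ 1/2 := by rw [norm_sub_rev (1:ℂ) (ψ t)]; linarith
    have hχ1 : ‖φ t / ψ t - 1‖ < 1 := by
      have heq : φ t / ψ t - 1 = (φ t - ψ t) / ψ t := by
        rw [eq_div_iff (hψne t ht), sub_mul, div_mul_cancel₀ _ (hψne t ht), one_mul]
      rw [heq, norm_div, div_lt_one (by linarith)]
      linarith
    have hre : (1 - φ t / ψ t).re ≤ ‖1 - φ t / ψ t‖ := by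
      exact Complex.re_le_norm _
    rw [norm_sub_rev] at hχ1
    have : (1 - φ t / ψ t).re = 1 - (φ t / ψ t).re := by simp
    rw [this] at hre
    linarith
  -- multiplicativity of χ on the ball
  have hχmul : ∀ t s, ‖t‖ < r → ‖s‖ < r → ‖t + s‖ < r →
      φ (t + s) / ψ (t + s) = (φ t / ψ t) * (φ s / ψ s) := by
    intro t s ht hs hts
    have e3 := h 3 (by norm_num) ![t, s, -(t+s)] (by
      rw [Fin.sum_univ_three]
      simp only [Matrix.cons_val_zero, Matrix.cons_val_one, Matrix.head_cons,
        Matrix.cons_val_two, Matrix.tail_cons]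
      abel)
    rw [Fin.prod_univ_three, Fin.prod_univ_three] at e3
    simp only [Matrix.cons_val_zero, Matrix.cons_val_one, Matrix.head_cons,
      Matrix.cons_val_two, Matrix.tail_cons] at e3
    have e2 := h 2 le_rfl ![t + s, -(t+s)] (by
      rw [Fin.sum_univ_two]
      simp only [Matrix.cons_val_zero, Matrix.cons_val_one, Matrix.head_cons]
      abel)
    rw [Fin.prod_univ_two, Fin.prod_univ_two] at e2
    simp only [Matrix.cons_val_zero, Matrix.cons_val_one, Matrix.head_cons] at e2
    have hC : φ (-(t+s)) ≠ 0 := by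
      rw [hφneg]
      simpa using hφne (t+s) hts
    have hC' : ψ (-(t+s)) ≠ 0 := by
      rw [hψneg]
      simpa using hψne (t+s) hts
    have key : φ t * φ s * ψ (t+s) = ψ t * ψ s * φ (t+s) := by
      apply mul_right_cancel₀ hC'
      calc φ t * φ s * ψ (t+s) * ψ (-(t+s))
          = φ t * φ s * (ψ (t+s) * ψ (-(t+s))) := by ring
        _ = φ t * φ s * (φ (t+s) * φ (-(t+s))) := by rw [← e2]
        _ = (φ t * φ s * φ (-(t+s))) * φ (t+s) := by ring
        _ = (ψ t * ψ s * ψ (-(t+s))) * φ (t+s) := by rw [e3]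
        _ = ψ t * ψ s * φ (t+s) * ψ (-(t+s)) := by ring
    rw [div_mul_div_comm, div_eq_div_iff (hψne _ hts) (mul_ne_zero (hψne t ht) (hψne s hs))]
    linear_combination -key
  -- the argument function
  set θ : EuclideanSpace ℝ (Fin d) → ℝ := fun t => Complex.arg (φ t / ψ t) with hθdef
  have hθ0 : θ 0 = 0 := by
    simp [hθdef, hφ0, hψ0]
  have hθbound : ∀ t, ‖t‖ < r → |θ t| < Real.pi / 2 := by
    intro t ht
    exact Complex.abs_arg_lt_pi_div_two_iff.mpr (Or.inl (hχre t ht))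
  have hθadd : ∀ t s, ‖t‖ < r → ‖s‖ < r → ‖t + s‖ < r → θ (t + s) = θ t + θ s := by
    intro t s ht hs hts
    have hne1 : φ t / ψ t ≠ 0 := div_ne_zero (hφne t ht) (hψne t ht)
    have hne2 : φ s / ψ s ≠ 0 := div_ne_zero (hφne s hs) (hψne s hs)
    have b1 := hθbound t ht
    have b2 := hθbound s hs
    have hmem : Complex.arg (φ t / ψ t) + Complex.arg (φ s / ψ s) ∈ Set.Ioc (-Real.pi) Real.pi := by
      constructor
      · rw [abs_lt] at b1 b2
        linarith [Real.pi_pos]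
      · rw [abs_lt] at b1 b2
        linarith [Real.pi_pos]
    calc θ (t + s) = Complex.arg ((φ t / ψ t) * (φ s / ψ s)) := by
          show Complex.arg (φ (t + s) / ψ (t + s)) = _
          rw [hχmul t s ht hs hts]
      _ = θ t + θ s := Complex.arg_mul hne1 hne2 hmem
  have hθcont : ∀ t, ‖t‖ < r → ContinuousAt θ t := by
    intro t ht
    have h1 : ContinuousAt Complex.arg (φ t / ψ t) := by
      apply Complex.continuousAt_arg
      rw [Complex.mem_slitPlane_iff]
      exact Or.inl (hχre t ht)
    have h2 : ContinuousAt (fun t => φ t / ψ t) t :=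
      (hφc.continuousAt).div (hψc.continuousAt) (hψne t ht)
    show ContinuousAt (fun t => Complex.arg (φ t / ψ t)) t
    exact ContinuousAt.comp (f := fun s => φ s / ψ s) h1 h2
  obtain ⟨a, ha⟩ := locally_additive_inner d θ r hr hθ0 hθadd hθcont
  -- local identity
  have hloc : ∀ t, ‖t‖ < r → φ t = ψ t * Complex.exp (Complex.I * ((inner ℝ a t : ℝ) : ℂ)) := by
    intro t ht
    have h1 : (‖φ t / ψ t‖ : ℂ) * Complex.exp ((θ t : ℂ) * Complex.I) = φ t / ψ t :=
      Complex.norm_mul_exp_arg_mul_I _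
    rw [hχabs t ht] at h1
    simp only [Complex.ofReal_one, one_mul] at h1
    have h2 : φ t = ψ t * Complex.exp ((θ t : ℂ) * Complex.I) := by
      rw [h1]
      field_simp [hψne t ht]
    rw [h2, ha t ht]
    ring_nf
  -- globalize
  refine ⟨a, fun t => ?_⟩
  set n : ℕ := ⌊‖t‖ / r⌋₊ + 1 with hn
  have hnR : (0 : ℝ) < n := by positivity
  have hnt : ‖t‖ < (n : ℝ) * r := by
    have h2 : ‖t‖ / r < (n : ℝ) := by
      rw [hn]; push_cast; exact Nat.lt_floor_add_one _
    calc ‖t‖ = (‖t‖ / r) * r := by field_simp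
    _ < (n : ℝ) * r := mul_lt_mul_of_pos_right h2 hr
  clear_value n
  set u : EuclideanSpace ℝ (Fin d) := (n : ℝ)⁻¹ • (-t) with hu
  have hun : ‖u‖ < r := by
    rw [hu, norm_smul, Real.norm_eq_abs, abs_of_nonneg (by positivity), norm_neg]
    rw [inv_mul_lt_iff₀ hnR]
    linarith
  have hsum : (∑ _i : Fin n, u) + t = 0 := by
    rw [Finset.sum_const, Finset.card_univ, Fintype.card_fin,
      ← Nat.cast_smul_eq_nsmul ℝ, hu, smul_smul, mul_inv_cancel₀ hnR.ne', one_smul]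
    abel
  have E := h (n + 1) (by omega) (Fin.snoc (fun _ : Fin n => u) t) (by
    rw [Fin.sum_univ_castSucc]
    simp only [Fin.snoc_castSucc, Fin.snoc_last]
    exact hsum)
  rw [Fin.prod_univ_castSucc, Fin.prod_univ_castSucc] at E
  simp only [Fin.snoc_castSucc, Fin.snoc_last, Finset.prod_const, Finset.card_univ,
    Fintype.card_fin] at E
  -- E : φ u ^ n * φ t = ψ u ^ n * ψ t
  have hexp : φ u = ψ u * Complex.exp (Complex.I * ((inner ℝ a u : ℝ) : ℂ)) := hloc u hun
  have hψun : ψ u ≠ 0 := hψne u hun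
  have hEn : ψ u ^ n * (Complex.exp (Complex.I * ((inner ℝ a u : ℝ) : ℂ)) ^ n * φ t)
      = ψ u ^ n * ψ t := by
    rw [← E, hexp]
    ring
  have hcancel : Complex.exp (Complex.I * ((inner ℝ a u : ℝ) : ℂ)) ^ n * φ t = ψ t :=
    mul_left_cancel₀ (pow_ne_zero n hψun) hEn
  have hinneru : (inner ℝ a u : ℝ) = (n : ℝ)⁻¹ * (-(inner ℝ a t : ℝ)) := by
    rw [hu, real_inner_smul_right, inner_neg_right]
  have hpow : Complex.exp (Complex.I * ((inner ℝ a u : ℝ) : ℂ)) ^ n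
      = Complex.exp (-(Complex.I * ((inner ℝ a t : ℝ) : ℂ))) := by
    rw [← Complex.exp_nat_mul]
    congr 1
    have hnc : ((n : ℕ) : ℂ) ≠ 0 := by
      exact_mod_cast ne_of_gt (show (0:ℝ) < (n:ℝ) from hnR)
    rw [hinneru]
    push_cast
    field_simp
  rw [hpow] at hcancel
  rw [← hcancel]
  have hone : Complex.exp (-(Complex.I * ((inner ℝ a t : ℝ) : ℂ)))
      * Complex.exp (Complex.I * ((inner ℝ a t : ℝ) : ℂ)) = 1 := by
    rw [← Complex.exp_add]
    simp
  linear_combination (-(φ t)) * hone
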